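/- Let ε ∈ ℝ with ε = 1 or ε = −1, let α, β, λ be real numbers with β ≠ 0, and set δ = (β² + λ² − αλ − ε)/β. Define complex 3×3 matrices A = !![−(I/3)(β + δ), ε·I, 0; I, (I/3)(2δ − β), −λ; 0, λ, (I/3)(2β − δ)] and B = !![−(I/3)(α + λ), 0, −ε; 0, (I/3)(2λ − α), −β; 1, β, (I/3)(2α − λ)] (where I = Complex.I and real entries are coerced). Then A * B = B * A. -/
import Mathlib


open Complex Matrix

/-- The matrix `A(s)` from the proof of Theorem 4.4. -/
noncomputable def matA (ε β δ l : ℝ) : Matrix (Fin 3) (Fin 3) ℂ :=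
  !![-(I / 3) * ((β : ℂ) + (δ : ℂ)), (ε : ℂ) * I, 0;
     I, (I / 3) * (2 * (δ : ℂ) - (β : ℂ)), -(l : ℂ);
     0, (l : ℂ), (I / 3) * (2 * (β : ℂ) - (δ : ℂ))]

/-- The matrix `B(s)` from the proof of Theorem 4.4. -/
noncomputable def matB (ε α β l : ℝ) : Matrix (Fin 3) (Fin 3) ℂ :=
  !![-(I / 3) * ((α : ℂ) + (l : ℂ)), 0, -(ε : ℂ);
     0, (I / 3) * (2 * (l : ℂ) - (α : ℂ)), -(β : ℂ);
     1, (β : ℂ), (I / 3) * (2 * (α : ℂ) - (l : ℂ))]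

/-- The solvability condition `[A(s), B(s)] = 0` asserted in the proof of Theorem 4.4,
with `δ = (β² + λ² − αλ − ε)/β` and curvature normalized so that `c = ε = ±1`. -/
theorem stmt11 (ε α β l δ : ℝ) (hε : ε = 1 ∨ ε = -1) (hβ : β ≠ 0)
    (hδ : δ = (β ^ 2 + l ^ 2 - α * l - ε) / β) :
    matA ε β δ l * matB ε α β l = matB ε α β l * matA ε β δ l := by
  have hd : (δ:ℂ) * β = (β:ℂ)^2 + (l:ℂ)^2 - (α:ℂ)*(l:ℂ) - (ε:ℂ) := by
    have h : δ * β = β ^ 2 + l ^ 2 - α * l - ε := by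
      rw [hδ]; field_simp
    exact_mod_cast h
  have hI : (I:ℂ)^2 = -1 := Complex.I_sq
  ext i j
  fin_cases i <;> fin_cases j <;>
    simp [matA, matB, Matrix.mul_apply, Fin.sum_univ_succ]
  · ring
  · linear_combination ((l:ℂ)*(ε:ℂ)) * hI
  · ring
  · linear_combination (-(l:ℂ)) * hI
  · ring
  · linear_combination (-I) * hd
  · ring
  · linear_combination (-I) * hd
  · ring
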